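/- Let f ∈ C²((a,∞)) ∩ C¹([a,∞)) satisfy f'' + b(r) f' + c(r) f = 0 on (a,∞) with |b|, |c| bounded on [a,∞) and c(r) ≤ 0. If f(a) = 0 and lim_{r→∞} f(r) = 0 then f is identically zero on [a,∞). -/

import Mathlib

open Set Filter Real

private lemma aux_nonpos
    (a : ℝ) (ha : 0 < a) (b c f f' f'' : ℝ → ℝ)
    (hb : ∃ C : ℝ, ∀ r ∈ Set.Ici a, |b r| ≤ C)
    (hcneg : ∀ r ∈ Set.Ici a, c r ≤ 0)
    (hf1 : ∀ r ∈ Set.Ici a, HasDerivWithinAt f (f' r) (Set.Ici a) r)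
    (hf1c : ContinuousOn f' (Set.Ici a))
    (hf2 : ∀ r ∈ Set.Ioi a, HasDerivAt f' (f'' r) r)
    (hode : ∀ r ∈ Set.Ioi a, f'' r + b r * f' r + c r * f r = 0)
    (hfa : f a = 0)
    (hlim : Filter.Tendsto f Filter.atTop (nhds 0)) :
    ∀ r ∈ Set.Ici a, f r ≤ 0 := by
  by_contra hcon
  push_neg at hcon
  obtain ⟨x, hx, hfx⟩ := hcon
  obtain ⟨C, hC⟩ := hb
  have hfc : ContinuousOn f (Set.Ici a) := fun r hr => (hf1 r hr).continuousWithinAt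
  have hev : ∀ᶠ r in atTop, f r < f x / 2 :=
    hlim.eventually (gt_mem_nhds (by linarith))
  obtain ⟨N, hN⟩ := Filter.eventually_atTop.mp hev
  set K := max N x with hKdef
  have haK : a ≤ K := le_trans hx (le_max_right _ _)
  obtain ⟨r₀, hr₀mem, hr₀max⟩ :=
    isCompact_Icc.exists_isMaxOn (Set.nonempty_Icc.mpr haK)
      (hfc.mono Set.Icc_subset_Ici_self)
  have hr₀max' : ∀ s ∈ Set.Icc a K, f s ≤ f r₀ := isMaxOn_iff.mp hr₀max
  set M := f r₀ with hMdef
  have hxM : f x ≤ M := hr₀max' x ⟨hx, le_max_right _ _⟩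
  have hM : 0 < M := lt_of_lt_of_le hfx hxM
  have har₀ : a < r₀ := by
    rcases lt_or_eq_of_le hr₀mem.1 with h | h
    · exact h
    · exfalso; rw [← h, hfa] at hMdef; rw [hMdef] at hM; linarith
  have hr₀K : r₀ < K := by
    rcases lt_or_eq_of_le hr₀mem.2 with h | h
    · exact h
    · exfalso
      have := hN K (le_max_left _ _)
      rw [h] at hMdef
      linarith
  have hdf : HasDerivAt f (f' r₀) r₀ :=
    (hf1 r₀ (le_of_lt har₀)).hasDerivAt (Ici_mem_nhds har₀)
  have hloc : ∀ᶠ s in nhds r₀, f s ≤ f r₀ := by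
    filter_upwards [Ioo_mem_nhds har₀ hr₀K] with s hs
    exact hr₀max' s ⟨hs.1.le, hs.2.le⟩
  have hf'r₀ : f' r₀ = 0 := IsLocalMax.hasDerivAt_eq_zero hloc hdf
  -- Claim*: on any interval [r₀, T] where f ≥ M/2 on [r₀, T), we get f ≥ M on [r₀, T].
  have claimStar : ∀ T, r₀ ≤ T → (∀ s ∈ Set.Ico r₀ T, M / 2 ≤ f s) →
      ∀ s ∈ Set.Icc r₀ T, M ≤ f s := by
    intro T hT hpos
    -- first: f' ≥ 0 on [r₀, T]
    have hderivnn : ∀ s ∈ Set.Icc r₀ T, 0 ≤ f' s := by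
      by_contra hcon2
      push_neg at hcon2
      obtain ⟨s, hs, hf's⟩ := hcon2
      set ψ : ℝ → ℝ := fun t => f' t * Real.exp (-C * t) with hψdef
      have hψs : ψ s < 0 := mul_neg_of_neg_of_pos hf's (Real.exp_pos _)
      have hr₀s : r₀ < s := by
        rcases lt_or_eq_of_le hs.1 with h | h
        · exact h
        · exfalso; rw [← h, hf'r₀] at hf's; linarith
      have hψc : ContinuousOn ψ (Set.Icc r₀ s) := by
        apply ContinuousOn.mul
        · exact hf1c.mono (fun t ht => le_trans har₀.le ht.1)
        · exact (Real.continuous_exp.comp (continuous_const.mul continuous_id)).continuousOn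
      set S := Set.Icc r₀ s ∩ ψ ⁻¹' (Set.Ici 0) with hSdef
      have hSclosed : IsClosed S :=
        hψc.preimage_isClosed_of_isClosed isClosed_Icc isClosed_Ici
      have hr₀S : r₀ ∈ S := by
        constructor
        · exact ⟨le_refl _, hr₀s.le⟩
        · show ψ r₀ ∈ Set.Ici 0
          simp only [Set.mem_Ici, hψdef, hf'r₀, zero_mul]
          exact le_refl 0
      have hSne : S.Nonempty := ⟨r₀, hr₀S⟩
      have hSbdd : BddAbove S := ⟨s, fun t ht => ht.1.2⟩
      set t₁ := sSup S with ht₁def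
      have ht₁S : t₁ ∈ S := hSclosed.csSup_mem hSne hSbdd
      have ht₁mem : t₁ ∈ Set.Icc r₀ s := ht₁S.1
      have hψt₁ : 0 ≤ ψ t₁ := ht₁S.2
      have ht₁s : t₁ < s := by
        rcases lt_or_eq_of_le ht₁mem.2 with h | h
        · exact h
        · exfalso; rw [h] at hψt₁; linarith
      have hneg : ∀ t, t₁ < t → t ≤ s → ψ t < 0 := by
        intro t h1 h2
        by_contra hge
        push_neg at hge
        have htS : t ∈ S := ⟨⟨le_trans ht₁mem.1 h1.le, h2⟩, hge⟩
        exact absurd (le_csSup hSbdd htS) (not_le.mpr h1)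
      -- ψ is monotone on [t₁, s]
      have hmono : MonotoneOn ψ (Set.Icc t₁ s) := by
        apply monotoneOn_of_deriv_nonneg (convex_Icc _ _)
          (hψc.mono (Set.Icc_subset_Icc ht₁mem.1 le_rfl))
        · intro t ht
          rw [interior_Icc] at ht
          have hta : a < t := lt_of_lt_of_le har₀ (le_trans ht₁mem.1 ht.1.le)
          have hE : HasDerivAt (fun u => Real.exp (-C * u)) (Real.exp (-C * t) * (-C * 1)) t :=
            HasDerivAt.exp ((hasDerivAt_id t).const_mul (-C))
          exact (((hf2 t hta).mul hE).differentiableAt).differentiableWithinAt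
        · intro t ht
          rw [interior_Icc] at ht
          have hta : a < t := lt_of_lt_of_le har₀ (le_trans ht₁mem.1 ht.1.le)
          have hE : HasDerivAt (fun u => Real.exp (-C * u)) (Real.exp (-C * t) * (-C * 1)) t :=
            HasDerivAt.exp ((hasDerivAt_id t).const_mul (-C))
          have hder : HasDerivAt ψ (f'' t * Real.exp (-C * t)
              + f' t * (Real.exp (-C * t) * (-C * 1))) t := (hf2 t hta).mul hE
          rw [hder.deriv]
          have hEpos : 0 < Real.exp (-C * t) := Real.exp_pos _
          have hψt : ψ t < 0 := hneg t ht.1 ht.2.le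
          have hf't : f' t < 0 := by
            by_contra h
            push_neg at h
            have : 0 ≤ ψ t := mul_nonneg h hEpos.le
            linarith
          have hft : 0 ≤ f t := by
            have := hpos t ⟨le_trans ht₁mem.1 ht.1.le, lt_of_lt_of_le ht.2 hs.2⟩
            linarith
          have hct : c t ≤ 0 := hcneg t (le_of_lt hta)
          have hbC : |b t| ≤ C := hC t (le_of_lt hta)
          have hbf' : b t * f' t ≤ C * (-f' t) := by
            calc b t * f' t ≤ |b t * f' t| := le_abs_self _
              _ = |b t| * |f' t| := abs_mul _ _
              _ = |b t| * (-f' t) := by rw [abs_of_neg hf't]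
              _ ≤ C * (-f' t) := mul_le_mul_of_nonneg_right hbC (by linarith)
          have hode' : f'' t = -(b t * f' t) - c t * f t := by
            have := hode t hta
            linarith
          have hcf : 0 ≤ -(c t * f t) := by
            have : c t * f t ≤ 0 := mul_nonpos_of_nonpos_of_nonneg hct hft
            linarith
          have hf''t : C * f' t ≤ f'' t := by
            rw [hode']
            linarith
          nlinarith [mul_le_mul_of_nonneg_right hf''t hEpos.le]
      have := hmono (Set.left_mem_Icc.mpr ht₁s.le) (Set.right_mem_Icc.mpr ht₁s.le) ht₁s.le
      linarith
    -- then f is monotone on [r₀, T]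
    have hfmono : MonotoneOn f (Set.Icc r₀ T) := by
      apply monotoneOn_of_deriv_nonneg (convex_Icc _ _)
        (hfc.mono (fun t ht => le_trans har₀.le ht.1))
      · intro t ht
        rw [interior_Icc] at ht
        have hta : a < t := lt_trans har₀ ht.1
        exact (((hf1 t hta.le).hasDerivAt (Ici_mem_nhds hta)).differentiableAt).differentiableWithinAt
      · intro t ht
        rw [interior_Icc] at ht
        have hta : a < t := lt_trans har₀ ht.1
        rw [((hf1 t hta.le).hasDerivAt (Ici_mem_nhds hta)).deriv]
        exact hderivnn t ⟨ht.1.le, ht.2.le⟩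
    intro s hs
    have := hfmono (Set.left_mem_Icc.mpr hT) hs hs.1
    linarith
  -- Main claim: f R ≥ M for every R ≥ r₀
  have main : ∀ R, r₀ ≤ R → M ≤ f R := by
    intro R hR
    set S₂ := {t ∈ Set.Icc r₀ R | ∀ s ∈ Set.Ico r₀ t, M / 2 ≤ f s} with hS₂def
    have hr₀S₂ : r₀ ∈ S₂ := ⟨⟨le_refl _, hR⟩, fun s hs => absurd hs.1 (not_le.mpr hs.2)⟩
    have hS₂ne : S₂.Nonempty := ⟨r₀, hr₀S₂⟩
    have hS₂bdd : BddAbove S₂ := ⟨R, fun t ht => ht.1.2⟩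
    set t₀ := sSup S₂ with ht₀def
    have ht₀mem : t₀ ∈ Set.Icc r₀ R :=
      ⟨le_csSup hS₂bdd hr₀S₂, csSup_le hS₂ne (fun t ht => ht.1.2)⟩
    have ht₀S₂ : t₀ ∈ S₂ := by
      refine ⟨ht₀mem, ?_⟩
      intro s hs
      obtain ⟨t, htS₂, hst⟩ := exists_lt_of_lt_csSup hS₂ne hs.2
      exact htS₂.2 s ⟨hs.1, hst⟩
    have hge : ∀ s ∈ Set.Icc r₀ t₀, M ≤ f s := claimStar t₀ ht₀mem.1 ht₀S₂.2
    rcases lt_or_eq_of_le ht₀mem.2 with hlt | heq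
    · exfalso
      -- extend past t₀ by continuity
      have hta : a < t₀ := lt_of_lt_of_le har₀ ht₀mem.1
      have hcont : ContinuousAt f t₀ :=
        (((hf1 t₀ hta.le).hasDerivAt (Ici_mem_nhds hta))).continuousAt
      have hft₀ : M ≤ f t₀ := hge t₀ ⟨ht₀mem.1, le_refl _⟩
      have hev2 : ∀ᶠ u in nhds t₀, M / 2 < f u :=
        ContinuousAt.eventually_lt (continuousAt_const (y := M / 2)) hcont
          (show M / 2 < f t₀ by linarith)
      obtain ⟨ε, hε, hball⟩ := Metric.eventually_nhds_iff.mp hev2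
      set t' := min R (t₀ + ε / 2) with ht'def
      have ht₀t' : t₀ < t' := lt_min hlt (by linarith)
      have ht'S₂ : t' ∈ S₂ := by
        refine ⟨⟨le_trans ht₀mem.1 ht₀t'.le, min_le_left _ _⟩, ?_⟩
        intro s hs
        rcases le_or_gt s t₀ with h | h
        · rcases lt_or_eq_of_le h with h' | h'
          · exact ht₀S₂.2 s ⟨hs.1, h'⟩
          · rw [h']; linarith
        · have hd : dist s t₀ < ε := by
            rw [Real.dist_eq, abs_of_pos (by linarith)]
            have : s < t₀ + ε / 2 := lt_of_lt_of_le hs.2 (min_le_right _ _)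
            linarith
          linarith [hball hd]
      linarith [le_csSup hS₂bdd ht'S₂]
    · rw [heq] at hge
      exact hge R ⟨hR, le_refl _⟩
  -- contradiction with f → 0
  have hbig : M ≤ f (max N r₀) := main (max N r₀) (le_max_right _ _)
  have hsmall : f (max N r₀) < f x / 2 := hN (max N r₀) (le_max_left _ _)
  linarith

theorem vanishing_data_exterior_zero_solution
    (a : ℝ) (ha : 0 < a) (b c f f' f'' : ℝ → ℝ)
    (hb : ∃ C : ℝ, ∀ r ∈ Set.Ici a, |b r| ≤ C)
    (hc : ∃ C : ℝ, ∀ r ∈ Set.Ici a, |c r| ≤ C)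
    (hcneg : ∀ r ∈ Set.Ici a, c r ≤ 0)
    (hf1 : ∀ r ∈ Set.Ici a, HasDerivWithinAt f (f' r) (Set.Ici a) r)
    (hf1c : ContinuousOn f' (Set.Ici a))
    (hf2 : ∀ r ∈ Set.Ioi a, HasDerivAt f' (f'' r) r)
    (hode : ∀ r ∈ Set.Ioi a, f'' r + b r * f' r + c r * f r = 0)
    (hfa : f a = 0)
    (hlim : Filter.Tendsto f Filter.atTop (nhds 0)) :
    ∀ r ∈ Set.Ici a, f r = 0 := by
  have h1 := aux_nonpos a ha b c f f' f'' hb hcneg hf1 hf1c hf2 hode hfa hlim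
  have h2 := aux_nonpos a ha b c (fun r => -f r) (fun r => -f' r) (fun r => -f'' r) hb hcneg
    (fun r hr => (hf1 r hr).neg) hf1c.neg (fun r hr => (hf2 r hr).neg)
    (fun r hr => by have := hode r hr; ring_nf; linarith)
    (by simp [hfa])
    (by simpa using hlim.neg)
  intro r hr
  have := h1 r hr
  have := h2 r hr
  linarith
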